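/- The subgroup of SO(3) generated by rotations by 2π/4 about the z-axis and by 2π/4 about the x-axis is finite (it is the rotation group of the cube, of order 24). -/

import Mathlib

open Matrix Real

private def f44 : Matrix (Fin 3) (Fin 3) ℤ →+* Matrix (Fin 3) (Fin 3) ℝ :=
  (Int.castRingHom ℝ).mapMatrix

private def L44 : List (Matrix (Fin 3) (Fin 3) ℤ) :=
  [!![1, 0, 0; 0, 1, 0; 0, 0, 1],
  !![0, -1, 0; 1, 0, 0; 0, 0, 1],
  !![1, 0, 0; 0, 0, -1; 0, 1, 0],
  !![-1, 0, 0; 0, -1, 0; 0, 0, 1],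
  !![0, 0, 1; 1, 0, 0; 0, 1, 0],
  !![0, -1, 0; 0, 0, -1; 1, 0, 0],
  !![1, 0, 0; 0, -1, 0; 0, 0, -1],
  !![0, 1, 0; -1, 0, 0; 0, 0, 1],
  !![-1, 0, 0; 0, 0, 1; 0, 1, 0],
  !![0, 0, 1; 0, -1, 0; 1, 0, 0],
  !![0, 1, 0; 1, 0, 0; 0, 0, -1],
  !![-1, 0, 0; 0, 0, -1; 0, -1, 0],
  !![0, -1, 0; -1, 0, 0; 0, 0, -1],
  !![1, 0, 0; 0, 0, 1; 0, -1, 0],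
  !![0, 0, -1; -1, 0, 0; 0, 1, 0],
  !![0, 1, 0; 0, 0, 1; 1, 0, 0],
  !![-1, 0, 0; 0, 1, 0; 0, 0, -1],
  !![0, 0, 1; -1, 0, 0; 0, -1, 0],
  !![0, 0, -1; 1, 0, 0; 0, -1, 0],
  !![0, 1, 0; 0, 0, -1; -1, 0, 0],
  !![0, -1, 0; 0, 0, 1; -1, 0, 0],
  !![0, 0, -1; 0, 1, 0; 1, 0, 0],
  !![0, 0, 1; 0, 1, 0; -1, 0, 0],
  !![0, 0, -1; 0, -1, 0; -1, 0, 0]]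

private lemma f44_apply (m : Matrix (Fin 3) (Fin 3) ℤ) (i j : Fin 3) :
    f44 m i j = (m i j : ℝ) := rfl

private lemma f44_injective : Function.Injective f44 := fun m n h => by
  ext i j
  have := congrFun (congrFun h i) j
  rw [f44_apply, f44_apply] at this
  exact_mod_cast this

private lemma f44_transpose (m : Matrix (Fin 3) (Fin 3) ℤ) : f44 mᵀ = (f44 m)ᵀ := by
  ext i j
  rw [f44_apply, Matrix.transpose_apply, Matrix.transpose_apply, f44_apply]

set_option maxHeartbeats 4000000 in
/-- The subgroup `G(4,4)` of `SO(3)` generated by rotations by `2π/4` about the z-axis and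
about the x-axis is finite: it is the rotation group of the cube, of order `24`. -/
theorem G44_finite (A B : Matrix.orthogonalGroup (Fin 3) ℝ)
    (hA : (A : Matrix (Fin 3) (Fin 3) ℝ) =
      !![cos (2*π/4), -sin (2*π/4), 0; sin (2*π/4), cos (2*π/4), 0; 0, 0, 1])
    (hB : (B : Matrix (Fin 3) (Fin 3) ℝ) =
      !![1, 0, 0; 0, cos (2*π/4), -sin (2*π/4); 0, sin (2*π/4), cos (2*π/4)]) :
    (Subgroup.closure {A, B} : Set (Matrix.orthogonalGroup (Fin 3) ℝ)).Finite ∧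
      Nat.card (Subgroup.closure {A, B} : Subgroup (Matrix.orthogonalGroup (Fin 3) ℝ)) = 24 := by
  have h2 : (2*π/4 : ℝ) = π/2 := by ring
  have hA' : (A : Matrix (Fin 3) (Fin 3) ℝ) = f44 !![0,-1,0; 1,0,0; 0,0,1] := by
    rw [hA, h2, Real.cos_pi_div_two, Real.sin_pi_div_two]
    ext i j
    fin_cases i <;> fin_cases j <;> norm_num [f44_apply]
  have hB' : (B : Matrix (Fin 3) (Fin 3) ℝ) = f44 !![1,0,0; 0,0,-1; 0,1,0] := by
    rw [hB, h2, Real.cos_pi_div_two, Real.sin_pi_div_two]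
    ext i j
    fin_cases i <;> fin_cases j <;> norm_num [f44_apply]
  -- the candidate carrier
  set S : Set (Matrix.orthogonalGroup (Fin 3) ℝ) :=
    {g | ∃ m ∈ L44, (g : Matrix (Fin 3) (Fin 3) ℝ) = f44 m} with hS
  have hmulL : ∀ m ∈ L44, ∀ n ∈ L44, m * n ∈ L44 := by decide
  have hinvL : ∀ m ∈ L44, mᵀ ∈ L44 := by decide
  have hstar : ∀ g : Matrix.orthogonalGroup (Fin 3) ℝ,
      ((g⁻¹ : Matrix.orthogonalGroup (Fin 3) ℝ) : Matrix (Fin 3) (Fin 3) ℝ)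
        = (g : Matrix (Fin 3) (Fin 3) ℝ)ᵀ := fun g => by
    rw [Matrix.UnitaryGroup.inv_val, Matrix.star_eq_conjTranspose,
      Matrix.conjTranspose_eq_transpose_of_trivial]
  let H : Subgroup (Matrix.orthogonalGroup (Fin 3) ℝ) :=
    { carrier := S,
       one_mem' := ⟨1, by decide, by rw [OneMemClass.coe_one, _root_.map_one]⟩,
       mul_mem' := by
         rintro a b ⟨m, hm, ha⟩ ⟨n, hn, hb⟩
         exact ⟨m * n, hmulL m hm n hn, by rw [MulMemClass.coe_mul, ha, hb, _root_.map_mul]⟩,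
       inv_mem' := by
         rintro a ⟨m, hm, ha⟩
         exact ⟨mᵀ, hinvL m hm, by rw [hstar, ha, f44_transpose]⟩ }
  have hAc : A ∈ Subgroup.closure {A, B} :=
    Subgroup.subset_closure (by simp)
  have hBc : B ∈ Subgroup.closure {A, B} :=
    Subgroup.subset_closure (by simp)
  have hle : Subgroup.closure {A, B} ≤ H := by
    rw [Subgroup.closure_le]
    rintro x (rfl | rfl)
    · exact ⟨_, by decide, hA'⟩
    · exact ⟨_, by decide, hB'⟩
  have hSfin : S.Finite := by
    have : S ⊆ Subtype.val ⁻¹' (f44 '' {m | m ∈ L44}) := by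
      rintro g ⟨m, hm, hg⟩
      exact ⟨m, hm, hg.symm⟩
    exact Set.Finite.subset
      (Set.Finite.preimage Subtype.val_injective.injOn
        (Set.Finite.image f44 L44.finite_toSet)) this
  have hge : H ≤ Subgroup.closure {A, B} := by
    rintro g ⟨m, hm, heq⟩
    fin_cases hm
    · have hgw : g = 1 := Subtype.val_injective (by
        rw [heq, OneMemClass.coe_one]
        exact (congrArg f44 (by decide : (1 : Matrix (Fin 3) (Fin 3) ℤ) = !![1, 0, 0; 0, 1, 0; 0, 0, 1])).symm ▸ (_root_.map_one f44))
      rw [hgw]; exact one_mem _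
    · have hgw : g = A := Subtype.val_injective (by
        rw [heq]
        simp only [MulMemClass.coe_mul, hA', hB', ← _root_.map_mul]
        all_goals exact congrArg f44 (by decide))
      rw [hgw]; exact hAc
    · have hgw : g = B := Subtype.val_injective (by
        rw [heq]
        simp only [MulMemClass.coe_mul, hA', hB', ← _root_.map_mul]
        all_goals exact congrArg f44 (by decide))
      rw [hgw]; exact hBc
    · have hgw : g = A * A := Subtype.val_injective (by
        rw [heq]
        simp only [MulMemClass.coe_mul, hA', hB', ← _root_.map_mul]
        all_goals exact congrArg f44 (by decide))
      rw [hgw]; exact mul_mem (hAc) (hAc)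
    · have hgw : g = A * B := Subtype.val_injective (by
        rw [heq]
        simp only [MulMemClass.coe_mul, hA', hB', ← _root_.map_mul]
        all_goals exact congrArg f44 (by decide))
      rw [hgw]; exact mul_mem (hAc) (hBc)
    · have hgw : g = B * A := Subtype.val_injective (by
        rw [heq]
        simp only [MulMemClass.coe_mul, hA', hB', ← _root_.map_mul]
        all_goals exact congrArg f44 (by decide))
      rw [hgw]; exact mul_mem (hBc) (hAc)
    · have hgw : g = B * B := Subtype.val_injective (by
        rw [heq]
        simp only [MulMemClass.coe_mul, hA', hB', ← _root_.map_mul]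
        all_goals exact congrArg f44 (by decide))
      rw [hgw]; exact mul_mem (hBc) (hBc)
    · have hgw : g = A * A * A := Subtype.val_injective (by
        rw [heq]
        simp only [MulMemClass.coe_mul, hA', hB', ← _root_.map_mul]
        all_goals exact congrArg f44 (by decide))
      rw [hgw]; exact mul_mem (mul_mem (hAc) (hAc)) (hAc)
    · have hgw : g = A * A * B := Subtype.val_injective (by
        rw [heq]
        simp only [MulMemClass.coe_mul, hA', hB', ← _root_.map_mul]
        all_goals exact congrArg f44 (by decide))
      rw [hgw]; exact mul_mem (mul_mem (hAc) (hAc)) (hBc)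
    · have hgw : g = A * B * A := Subtype.val_injective (by
        rw [heq]
        simp only [MulMemClass.coe_mul, hA', hB', ← _root_.map_mul]
        all_goals exact congrArg f44 (by decide))
      rw [hgw]; exact mul_mem (mul_mem (hAc) (hBc)) (hAc)
    · have hgw : g = A * B * B := Subtype.val_injective (by
        rw [heq]
        simp only [MulMemClass.coe_mul, hA', hB', ← _root_.map_mul]
        all_goals exact congrArg f44 (by decide))
      rw [hgw]; exact mul_mem (mul_mem (hAc) (hBc)) (hBc)
    · have hgw : g = B * A * A := Subtype.val_injective (by
        rw [heq]
        simp only [MulMemClass.coe_mul, hA', hB', ← _root_.map_mul]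
        all_goals exact congrArg f44 (by decide))
      rw [hgw]; exact mul_mem (mul_mem (hBc) (hAc)) (hAc)
    · have hgw : g = B * B * A := Subtype.val_injective (by
        rw [heq]
        simp only [MulMemClass.coe_mul, hA', hB', ← _root_.map_mul]
        all_goals exact congrArg f44 (by decide))
      rw [hgw]; exact mul_mem (mul_mem (hBc) (hBc)) (hAc)
    · have hgw : g = B * B * B := Subtype.val_injective (by
        rw [heq]
        simp only [MulMemClass.coe_mul, hA', hB', ← _root_.map_mul]
        all_goals exact congrArg f44 (by decide))
      rw [hgw]; exact mul_mem (mul_mem (hBc) (hBc)) (hBc)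
    · have hgw : g = A * A * A * B := Subtype.val_injective (by
        rw [heq]
        simp only [MulMemClass.coe_mul, hA', hB', ← _root_.map_mul]
        all_goals exact congrArg f44 (by decide))
      rw [hgw]; exact mul_mem (mul_mem (mul_mem (hAc) (hAc)) (hAc)) (hBc)
    · have hgw : g = A * A * B * A := Subtype.val_injective (by
        rw [heq]
        simp only [MulMemClass.coe_mul, hA', hB', ← _root_.map_mul]
        all_goals exact congrArg f44 (by decide))
      rw [hgw]; exact mul_mem (mul_mem (mul_mem (hAc) (hAc)) (hBc)) (hAc)
    · have hgw : g = A * A * B * B := Subtype.val_injective (by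
        rw [heq]
        simp only [MulMemClass.coe_mul, hA', hB', ← _root_.map_mul]
        all_goals exact congrArg f44 (by decide))
      rw [hgw]; exact mul_mem (mul_mem (mul_mem (hAc) (hAc)) (hBc)) (hBc)
    · have hgw : g = A * B * A * A := Subtype.val_injective (by
        rw [heq]
        simp only [MulMemClass.coe_mul, hA', hB', ← _root_.map_mul]
        all_goals exact congrArg f44 (by decide))
      rw [hgw]; exact mul_mem (mul_mem (mul_mem (hAc) (hBc)) (hAc)) (hAc)
    · have hgw : g = A * B * B * B := Subtype.val_injective (by
        rw [heq]
        simp only [MulMemClass.coe_mul, hA', hB', ← _root_.map_mul]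
        all_goals exact congrArg f44 (by decide))
      rw [hgw]; exact mul_mem (mul_mem (mul_mem (hAc) (hBc)) (hBc)) (hBc)
    · have hgw : g = B * A * A * A := Subtype.val_injective (by
        rw [heq]
        simp only [MulMemClass.coe_mul, hA', hB', ← _root_.map_mul]
        all_goals exact congrArg f44 (by decide))
      rw [hgw]; exact mul_mem (mul_mem (mul_mem (hBc) (hAc)) (hAc)) (hAc)
    · have hgw : g = B * B * B * A := Subtype.val_injective (by
        rw [heq]
        simp only [MulMemClass.coe_mul, hA', hB', ← _root_.map_mul]
        all_goals exact congrArg f44 (by decide))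
      rw [hgw]; exact mul_mem (mul_mem (mul_mem (hBc) (hBc)) (hBc)) (hAc)
    · have hgw : g = A * A * A * B * A := Subtype.val_injective (by
        rw [heq]
        simp only [MulMemClass.coe_mul, hA', hB', ← _root_.map_mul]
        all_goals exact congrArg f44 (by decide))
      rw [hgw]; exact mul_mem (mul_mem (mul_mem (mul_mem (hAc) (hAc)) (hAc)) (hBc)) (hAc)
    · have hgw : g = A * B * A * A * A := Subtype.val_injective (by
        rw [heq]
        simp only [MulMemClass.coe_mul, hA', hB', ← _root_.map_mul]
        all_goals exact congrArg f44 (by decide))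
      rw [hgw]; exact mul_mem (mul_mem (mul_mem (mul_mem (hAc) (hBc)) (hAc)) (hAc)) (hAc)
    · have hgw : g = A * B * B * B * A := Subtype.val_injective (by
        rw [heq]
        simp only [MulMemClass.coe_mul, hA', hB', ← _root_.map_mul]
        all_goals exact congrArg f44 (by decide))
      rw [hgw]; exact mul_mem (mul_mem (mul_mem (mul_mem (hAc) (hBc)) (hBc)) (hBc)) (hAc)
  have heqHG : Subgroup.closure {A, B} = H := le_antisymm hle hge
  constructor
  · exact hSfin.subset (fun x hx => hle hx)
  · rw [heqHG]
    have hortho : ∀ m ∈ L44, f44 m ∈ Matrix.orthogonalGroup (Fin 3) ℝ := by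
      intro m hm
      rw [Matrix.mem_orthogonalGroup_iff,
        ← f44_transpose, ← _root_.map_mul]
      have key : ∀ m ∈ L44, m * mᵀ = 1 := by decide
      rw [key m hm, _root_.map_one]
    let e : {m : Matrix (Fin 3) (Fin 3) ℤ // m ∈ L44} → H :=
      fun x => ⟨⟨f44 x.1, hortho x.1 x.2⟩, x.1, x.2, rfl⟩
    have hbij : Function.Bijective e := by
      constructor
      · rintro ⟨m, hm⟩ ⟨n, hn⟩ h
        have : f44 m = f44 n := congrArg (Subtype.val ∘ Subtype.val) h
        exact Subtype.ext (f44_injective this)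
      · rintro ⟨g, m, hm, hg⟩
        exact ⟨⟨m, hm⟩, Subtype.ext (Subtype.ext hg.symm)⟩
    rw [← Nat.card_eq_of_bijective e hbij]
    rw [Nat.card_eq_fintype_card]
    decide
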